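/- Starting from ℤ/2ℤ and performing two successive pushouts—first with ℤ/73ℤ over ℤ/73²ℤ (trivial map into ℤ/2ℤ, canonical surjection onto ℤ/73ℤ), then with ℤ/19ℤ over ℤ/19²ℤ (trivial map into the resulting group, canonical surjection onto ℤ/19ℤ)—the resulting group is isomorphic to ℤ/2ℤ. -/

import Mathlib

open Monoid in
/-- The pushout (amalgamated product) of groups along `f : A →* G` and `g : A →* H`:
the quotient of the free product `G ∗ H` by the normal closure of
`{f(a) * g(a)⁻¹ : a ∈ A}`. -/
def GroupPushout {A G H : Type*} [Group A] [Group G] [Group H]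
    (f : A →* G) (g : A →* H) : Type _ :=
  Coprod G H ⧸ Subgroup.normalClosure
    {x : Coprod G H | ∃ a : A, x = Coprod.inl (f a) * (Coprod.inr (g a))⁻¹}

open Monoid in
instance {A G H : Type*} [Group A] [Group G] [Group H] (f : A →* G) (g : A →* H) :
    Group (GroupPushout f g) :=
  QuotientGroup.Quotient.group _

/-- The canonical reduction `ℤ/n²ℤ → ℤ/nℤ`, written multiplicatively. -/
def zmodRed (n : ℕ) : Multiplicative (ZMod (n ^ 2)) →* Multiplicative (ZMod n) :=
  AddMonoidHom.toMultiplicative (ZMod.castHom (dvd_pow_self n two_ne_zero) (ZMod n)).toAddMonoidHom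

/-- First pushout: `ℤ/2ℤ` with `ℤ/73ℤ` over `ℤ/73²ℤ`
(trivial map into `ℤ/2ℤ`, reduction onto `ℤ/73ℤ`). -/
def FirstPushout : Type :=
  GroupPushout (1 : Multiplicative (ZMod (73 ^ 2)) →* Multiplicative (ZMod 2)) (zmodRed 73)

instance : Group FirstPushout := by unfold FirstPushout; infer_instance

/-- Second pushout: the result with `ℤ/19ℤ` over `ℤ/19²ℤ`
(trivial map into `FirstPushout`, reduction onto `ℤ/19ℤ`). -/
def SecondPushout : Type :=
  GroupPushout (1 : Multiplicative (ZMod (19 ^ 2)) →* FirstPushout) (zmodRed 19)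

instance : Group SecondPushout := by unfold SecondPushout; infer_instance

open Monoid

section
variable {A G H : Type*} [Group A] [Group G] [Group H] (g : A →* H)

private def pN (g : A →* H) : Subgroup (Coprod G H) :=
  Subgroup.normalClosure
    {x : Coprod G H | ∃ a : A, x = Coprod.inl ((1 : A →* G) a) * (Coprod.inr (g a))⁻¹}

private instance : (pN (G := G) g).Normal := Subgroup.normalClosure_normal

private def pφ (g : A →* H) : GroupPushout (1 : A →* G) g →* G :=
  QuotientGroup.lift (pN g) (Coprod.lift (MonoidHom.id G) (1 : H →* G)) (by
    intro x hx
    refine Subgroup.normalClosure_le_normal ?_ hx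
    rintro y ⟨a, rfl⟩
    simp [MonoidHom.mem_ker])

private def pψ (g : A →* H) : G →* GroupPushout (1 : A →* G) g :=
  (QuotientGroup.mk' (pN g)).comp Coprod.inl

/-- Pushout along a trivial map and a surjection collapses to the first group. -/
noncomputable def pushoutTrivial (hg : Function.Surjective g) :
    GroupPushout (1 : A →* G) g ≃* G := by
  have hφψ : ∀ x, pφ g (pψ (G := G) g x) = x := by
    intro x
    show QuotientGroup.lift _ _ _ (((QuotientGroup.mk' (pN g)).comp Coprod.inl) x) = x
    rw [MonoidHom.comp_apply, QuotientGroup.mk'_apply, QuotientGroup.lift_mk]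
    simp
  have hψsurj : Function.Surjective (pψ (G := G) g) := by
    intro q
    obtain ⟨x, rfl⟩ := QuotientGroup.mk'_surjective (pN g) q
    induction x using Coprod.induction_on with
    | inl m => exact ⟨m, rfl⟩
    | inr n =>
      obtain ⟨a, rfl⟩ := hg n
      refine ⟨1, ?_⟩
      have h1 : (QuotientGroup.mk' (pN (G := G) g))
          (Coprod.inl ((1 : A →* G) a) * (Coprod.inr (g a))⁻¹) = 1 := by
        rw [QuotientGroup.mk'_apply, QuotientGroup.eq_one_iff]
        exact Subgroup.subset_normalClosure ⟨a, rfl⟩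
      have h2 : (QuotientGroup.mk' (pN (G := G) g)) (Coprod.inr (g a)) =
          (QuotientGroup.mk' (pN (G := G) g)) (Coprod.inl ((1 : A →* G) a)) := by
        rw [map_mul, map_inv] at h1
        rw [eq_comm, ← mul_inv_eq_one]
        exact h1
      simp only [pψ, MonoidHom.comp_apply]
      rw [h2]; simp; exact map_one _
    | mul x y hx hy =>
      obtain ⟨a, ha⟩ := hx
      obtain ⟨b, hb⟩ := hy
      exact ⟨a * b, by rw [map_mul, ha, hb, map_mul]; rfl⟩
  have hψinj : Function.Injective (pψ (G := G) g) := Function.LeftInverse.injective hφψ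
  exact MulEquiv.ofBijective (pψ g) ⟨hψinj, hψsurj⟩ |>.symm

end

lemma zmodRed_surjective (n : ℕ) : Function.Surjective (zmodRed n) := by
  intro x
  obtain ⟨y, hy⟩ := ZMod.ringHom_surjective (ZMod.castHom (dvd_pow_self n two_ne_zero) (ZMod n))
    (Multiplicative.toAdd x)
  exact ⟨Multiplicative.ofAdd y, by
    simpa [zmodRed] using congrArg Multiplicative.ofAdd hy⟩

theorem secondPushout_iso_zmod_two :
    Nonempty (SecondPushout ≃* Multiplicative (ZMod 2)) := by
  have e1 : FirstPushout ≃* Multiplicative (ZMod 2) :=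
    pushoutTrivial (zmodRed 73) (zmodRed_surjective 73)
  have e2 : SecondPushout ≃* FirstPushout :=
    pushoutTrivial (zmodRed 19) (zmodRed_surjective 19)
  exact ⟨e2.trans e1⟩
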